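/- Let m, k ∈ ℕ, let X : ℝᵐ × ℝᵏ → ℝᵐ be continuous, let a < b, let u : ℝ → ℝᵏ, and let γ : ℝ → ℝᵐ be continuous with r ↦ X(γ(r), u(r)) integrable on [a,b] and γ(t) = γ(a) + ∫_a^t X(γ(r), u(r)) dr for all t ∈ [a,b]. Let τ ∈ (a,b), l_τ ≥ 0, δτ ∈ ℝ, u_τ ∈ ℝᵏ, and assume τ is a two-sided Lebesgue time for X∘(γ,u): ∫_τ^{τ+h} X(γ(r), u(r)) dr = h·X(γ(τ), u(τ)) + o(h) as h → 0 (h of either sign). Let ε > 0 be such that for all s ∈ (0,ε], a < τ − (l_τ − δτ)s and τ + δτ·s < b, and for each s ∈ (0, ε] let γₛ : ℝ → ℝᵐ be continuous, satisfying γₛ(t) = γ(a) + ∫_a^t X(γₛ(r), uₛ(r)) dr for all t ∈ [a, τ + δτ·s], where uₛ(r) = u_τ for r ∈ (τ − (l_τ − δτ)s, τ + δτ·s] and uₛ(r) = u(r) otherwise. Assume moreover that γₛ(t) = γ(t) for all t ∈ [a, τ − (l_τ − δτ)s] ∩ [a,b] and that sup_{t ∈ [a, τ + δτ·s]} ‖γₛ(t)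 − γ(t)‖ → 0 as s → 0⁺. Then (γₛ(τ + δτ·s) − γ(τ))/s → X(γ(τ), u(τ))·δτ + (X(γ(τ), u_τ) − X(γ(τ), u(τ)))·l_τ as s → 0⁺; i.e. the curve s ↦ γₛ(τ + δτ·s) has this time-perturbation vector v[π_±] as one-sided tangent vector at s = 0. -/

import Mathlib

open MeasureTheory Set Filter

set_option maxHeartbeats 1000000 in
theorem time_perturbation_vector
    (m k : ℕ)
    (X : EuclideanSpace ℝ (Fin m) × EuclideanSpace ℝ (Fin k) → EuclideanSpace ℝ (Fin m))
    (hX : Continuous X)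
    (a b : ℝ) (hab : a < b)
    (u : ℝ → EuclideanSpace ℝ (Fin k))
    (γ : ℝ → EuclideanSpace ℝ (Fin m)) (hγc : Continuous γ)
    (hint : IntervalIntegrable (fun r => X (γ r, u r)) volume a b)
    (hγ : ∀ t ∈ Icc a b, γ t = γ a + ∫ r in a..t, X (γ r, u r))
    (τ : ℝ) (hτ : τ ∈ Ioo a b) (lτ : ℝ) (hlτ : 0 ≤ lτ) (δτ : ℝ)
    (uτ : EuclideanSpace ℝ (Fin k))
    (hLeb : Tendsto (fun h : ℝ => (1 / h) • ∫ r in τ..(τ + h), X (γ r, u r))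
      (nhdsWithin 0 {0}ᶜ) (nhds (X (γ τ, u τ))))
    (ε : ℝ) (hε : 0 < ε)
    (hεab : ∀ s ∈ Ioc (0 : ℝ) ε, a < τ - (lτ - δτ) * s ∧ τ + δτ * s < b)
    (us : ℝ → ℝ → EuclideanSpace ℝ (Fin k))
    (hus : ∀ s r : ℝ, us s r =
      if τ - (lτ - δτ) * s < r ∧ r ≤ τ + δτ * s then uτ else u r)
    (γs : ℝ → ℝ → EuclideanSpace ℝ (Fin m))
    (hγsc : ∀ s ∈ Ioc (0 : ℝ) ε, Continuous (γs s))
    (hγs : ∀ s ∈ Ioc (0 : ℝ) ε, ∀ t ∈ Icc a (τ + δτ * s),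
      γs s t = γ a + ∫ r in a..t, X (γs s r, us s r))
    (hagree : ∀ s ∈ Ioc (0 : ℝ) ε, ∀ t ∈ Icc a (τ - (lτ - δτ) * s) ∩ Icc a b,
      γs s t = γ t)
    (hunif : Tendsto (fun s : ℝ => ⨆ t ∈ Icc a (τ + δτ * s), ‖γs s t - γ t‖)
      (nhdsWithin 0 (Ioi 0)) (nhds 0)) :
    Tendsto (fun s : ℝ => (1 / s) • (γs s (τ + δτ * s) - γ τ)) (nhdsWithin 0 (Ioi 0))
      (nhds (δτ • X (γ τ, u τ) + lτ • (X (γ τ, uτ) - X (γ τ, u τ)))) := by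
  obtain ⟨haτ, hτb⟩ := hτ
  set v' := X (γ τ, u τ) with hv'def
  set v := X (γ τ, uτ) with hvdef
  -- basic inequalities
  have hbasic : ∀ s ∈ Ioc (0:ℝ) ε,
      a < τ - (lτ - δτ) * s ∧ τ - (lτ - δτ) * s ≤ τ + δτ * s ∧ τ + δτ * s < b := by
    intro s hs
    refine ⟨(hεab s hs).1, ?_, (hεab s hs).2⟩
    nlinarith [mul_nonneg hlτ hs.1.le]
  -- decomposition of the difference quotient numerator
  have hdecomp : ∀ s ∈ Ioc (0:ℝ) ε,
      γs s (τ + δτ * s) - γ τ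
        = (∫ r in τ..(τ - (lτ - δτ) * s), X (γ r, u r))
          + ∫ r in (τ - (lτ - δτ) * s)..(τ + δτ * s), X (γs s r, uτ) := by
    intro s hs
    obtain ⟨h1, h2, h3⟩ := hbasic s hs
    set t₀ := τ - (lτ - δτ) * s with ht₀
    set t₁ := τ + δτ * s with ht₁
    have ht₀b : t₀ ≤ b := h2.trans h3.le
    have hat₀ : a ≤ t₀ := h1.le
    have hmem₀ : t₀ ∈ Icc a t₁ := ⟨hat₀, h2⟩
    have hmem₁ : t₁ ∈ Icc a t₁ := ⟨hat₀.trans h2, le_refl _⟩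
    have hfa : ∀ r ∈ Icc a t₀, X (γs s r, us s r) = X (γ r, u r) := by
      intro r hr
      have h4 : us s r = u r := by
        rw [hus, if_neg]
        exact fun h => absurd h.1 (not_lt.2 hr.2)
      rw [h4, hagree s hs r ⟨hr, ⟨hr.1, hr.2.trans ht₀b⟩⟩]
    have hint0 : IntervalIntegrable (fun r => X (γs s r, us s r)) volume a t₀ := by
      rw [intervalIntegrable_iff_integrableOn_Ioc_of_le hat₀]
      have hbase : IntegrableOn (fun r => X (γ r, u r)) (Ioc a t₀) volume :=
        ((intervalIntegrable_iff_integrableOn_Ioc_of_le hab.le).1 hint).mono_set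
          (Ioc_subset_Ioc_right ht₀b)
      exact hbase.congr_fun (fun r hr => (hfa r ⟨hr.1.le, hr.2⟩).symm) measurableSet_Ioc
    have hgc : Continuous fun r => X (γs s r, uτ) :=
      hX.comp ((hγsc s hs).prodMk continuous_const)
    have hint1 : IntervalIntegrable (fun r => X (γs s r, us s r)) volume t₀ t₁ := by
      rw [intervalIntegrable_iff_integrableOn_Ioc_of_le h2]
      exact hgc.integrableOn_Ioc.congr_fun
        (fun r hr => by rw [hus, if_pos ⟨hr.1, hr.2⟩]) measurableSet_Ioc
    have hsplit : γs s t₁ - γs s t₀ = ∫ r in t₀..t₁, X (γs s r, us s r) := by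
      rw [hγs s hs t₁ hmem₁, hγs s hs t₀ hmem₀, add_sub_add_left_eq_sub]
      exact intervalIntegral.integral_interval_sub_left (hint0.trans hint1) hint0
    have hγt₀ : γs s t₀ = γ t₀ := hagree s hs t₀ ⟨⟨hat₀, le_refl _⟩, ⟨hat₀, ht₀b⟩⟩
    have hγsplit : γ t₀ - γ τ = ∫ r in τ..t₀, X (γ r, u r) := by
      rw [hγ t₀ ⟨hat₀, ht₀b⟩, hγ τ ⟨haτ.le, hτb.le⟩, add_sub_add_left_eq_sub]
      refine intervalIntegral.integral_interval_sub_left (hint.mono_set ?_) (hint.mono_set ?_)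
      · rw [uIcc_of_le hat₀, uIcc_of_le hab.le]
        exact Icc_subset_Icc_right ht₀b
      · rw [uIcc_of_le haτ.le, uIcc_of_le hab.le]
        exact Icc_subset_Icc_right hτb.le
    have hcongr : (∫ r in t₀..t₁, X (γs s r, us s r)) = ∫ r in t₀..t₁, X (γs s r, uτ) := by
      refine intervalIntegral.integral_congr_ae (Eventually.of_forall fun r hr => ?_)
      rw [uIoc_of_le h2] at hr
      rw [hus, if_pos ⟨hr.1, hr.2⟩]
    calc γs s t₁ - γ τ = (γ t₀ - γ τ) + (γs s t₁ - γs s t₀) := by rw [hγt₀]; abel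
      _ = (∫ r in τ..t₀, X (γ r, u r)) + ∫ r in t₀..t₁, X (γs s r, uτ) := by
          rw [hsplit, hcongr, hγsplit]
  -- Term A
  have hA : Tendsto (fun s : ℝ => (1 / s) • ∫ r in τ..(τ - (lτ - δτ) * s), X (γ r, u r))
      (nhdsWithin 0 (Ioi 0)) (nhds ((δτ - lτ) • v')) := by
    rcases eq_or_ne (δτ - lτ) 0 with hd | hd
    · have h0 : lτ - δτ = 0 := by linarith
      simp only [h0, zero_mul, sub_zero, intervalIntegral.integral_same, smul_zero, hd,
        zero_smul]
      exact tendsto_const_nhds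
    · have hmap : Tendsto (fun s : ℝ => (δτ - lτ) * s) (nhdsWithin 0 (Ioi 0))
          (nhdsWithin 0 {0}ᶜ) := by
        apply tendsto_nhdsWithin_of_tendsto_nhds_of_eventually_within
        · have h5 : Tendsto (fun s : ℝ => (δτ - lτ) * s) (nhds 0) (nhds 0) := by
            simpa using (continuous_const_mul (δτ - lτ)).tendsto (0:ℝ)
          exact h5.mono_left nhdsWithin_le_nhds
        · exact eventually_mem_nhdsWithin.mono fun s hs => mul_ne_zero hd (ne_of_gt hs)
      have h1 := (hLeb.comp hmap).const_smul (δτ - lτ)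
      apply h1.congr'
      filter_upwards [self_mem_nhdsWithin] with s hs
      have hs0 : (s:ℝ) ≠ 0 := ne_of_gt hs
      have hb : τ + (δτ - lτ) * s = τ - (lτ - δτ) * s := by ring
      simp only [Function.comp]
      rw [hb, smul_smul]
      congr 1
      field_simp
  -- Term B
  have hB : Tendsto
      (fun s : ℝ => (1 / s) • ∫ r in (τ - (lτ - δτ) * s)..(τ + δτ * s), X (γs s r, uτ))
      (nhdsWithin 0 (Ioi 0)) (nhds (lτ • v)) := by
    rw [Metric.tendsto_nhdsWithin_nhds]
    intro η hη
    set η' := η / (lτ + 1) with hη'def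
    have hη' : 0 < η' := div_pos hη (by linarith)
    have hF : Continuous fun p : EuclideanSpace ℝ (Fin m) => X (p, uτ) :=
      hX.comp (continuous_id.prodMk continuous_const)
    obtain ⟨δ₁, hδ₁, hFδ⟩ := Metric.continuousAt_iff.mp (hF.continuousAt (x := γ τ)) η' hη'
    obtain ⟨δ₂, hδ₂, hγδ⟩ :=
      Metric.continuousAt_iff.mp (hγc.continuousAt (x := τ)) (δ₁ / 2) (half_pos hδ₁)
    have hev : {s : ℝ | (⨆ t ∈ Icc a (τ + δτ * s), ‖γs s t - γ t‖) < δ₁ / 2}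
        ∈ nhdsWithin (0:ℝ) (Ioi 0) := by
      have h := hunif (Iio_mem_nhds (half_pos hδ₁))
      rw [mem_map] at h
      exact h
    rw [Metric.mem_nhdsWithin_iff] at hev
    obtain ⟨δ₃, hδ₃, hball⟩ := hev
    set A := |lτ - δτ| + |δτ| with hAdef
    have hA0 : 0 ≤ A := by positivity
    refine ⟨min (min δ₃ ε) (δ₂ / (A + 1)), by positivity, ?_⟩
    intro s hs hsd
    have hs0 : (0:ℝ) < s := hs
    rw [Real.dist_eq, sub_zero, abs_of_pos hs0] at hsd
    have hsδ₃ : s < δ₃ := lt_of_lt_of_le hsd ((min_le_left _ _).trans (min_le_left _ _))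
    have hsε' : s ≤ ε := ((lt_of_lt_of_le hsd ((min_le_left _ _).trans (min_le_right _ _)))).le
    have hsδ₂ : s < δ₂ / (A + 1) := lt_of_lt_of_le hsd (min_le_right _ _)
    have hsIoc : s ∈ Ioc (0:ℝ) ε := ⟨hs0, hsε'⟩
    obtain ⟨h1, h2, h3⟩ := hbasic s hsIoc
    set t₀ := τ - (lτ - δτ) * s with ht₀
    set t₁ := τ + δτ * s with ht₁
    have ht : t₁ - t₀ = lτ * s := by rw [ht₀, ht₁]; ring
    have hgc : Continuous fun r => X (γs s r, uτ) :=
      hX.comp ((hγsc s hsIoc).prodMk continuous_const)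
    have hMs : (⨆ t ∈ Icc a t₁, ‖γs s t - γ t‖) < δ₁ / 2 := by
      apply hball
      constructor
      · simp [Real.dist_eq, abs_of_pos hs0, hsδ₃]
      · exact hs0
    have hbdd : BddAbove ((fun t => ‖γs s t - γ t‖) '' Icc a t₁) :=
      (isCompact_Icc.image (((hγsc s hsIoc).sub hγc).norm)).bddAbove
    have key : ∀ r ∈ Set.uIoc t₀ t₁, ‖X (γs s r, uτ) - v‖ ≤ η' := by
      intro r hr
      rw [uIoc_of_le h2] at hr
      have hra : a ≤ r := h1.le.trans hr.1.le
      have h5 : ‖γs s r - γ r‖ ≤ ⨆ t ∈ Icc a t₁, ‖γs s t - γ t‖ := by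
        have hrng : range (fun t => ⨆ _ : t ∈ Icc a t₁, ‖γs s t - γ t‖)
            ⊆ insert 0 ((fun t => ‖γs s t - γ t‖) '' Icc a t₁) := by
          rintro x ⟨t, rfl⟩
          by_cases htm : t ∈ Icc a t₁
          · refine Or.inr ⟨t, htm, ?_⟩
            exact (ciSup_pos (f := fun _ => ‖γs s t - γ t‖) htm).symm
          · refine Or.inl ?_
            simp [htm]
        have hb2 : BddAbove (range fun t => ⨆ _ : t ∈ Icc a t₁, ‖γs s t - γ t‖) :=
          ((hbdd.insert 0).mono hrng)
        have heq : ‖γs s r - γ r‖ = ⨆ _ : r ∈ Icc a t₁, ‖γs s r - γ r‖ :=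
          (ciSup_pos (f := fun _ => ‖γs s r - γ r‖) ⟨hra, hr.2⟩).symm
        rw [heq]
        exact le_ciSup hb2 r
      have hrd : dist r τ < δ₂ := by
        have hrτ : |r - τ| ≤ A * s := by
          rw [abs_le]
          constructor
          · nlinarith [le_abs_self (lτ - δτ), abs_nonneg δτ, hr.1.le]
          · nlinarith [le_abs_self δτ, abs_nonneg (lτ - δτ), hr.2]
        have hA1 : s * (A + 1) < δ₂ :=
          (lt_div_iff₀ (by linarith : (0:ℝ) < A + 1)).mp hsδ₂
        have : A * s < δ₂ := by nlinarith
        rw [Real.dist_eq]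
        linarith
      have h6 : dist (γ r) (γ τ) < δ₁ / 2 := hγδ hrd
      have h7 : dist (γs s r) (γ τ) < δ₁ := by
        calc dist (γs s r) (γ τ) ≤ dist (γs s r) (γ r) + dist (γ r) (γ τ) := dist_triangle _ _ _
          _ < δ₁ / 2 + δ₁ / 2 := by
              apply add_lt_add_of_le_of_lt _ h6
              rw [dist_eq_norm]
              exact h5.trans_lt hMs |>.le
          _ = δ₁ := by ring
      have := hFδ h7
      rw [dist_eq_norm] at this
      exact this.le
    have hnorm := intervalIntegral.norm_integral_le_of_norm_le_const key
    have hsub : (∫ r in t₀..t₁, X (γs s r, uτ)) - (lτ * s) • v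
        = ∫ r in t₀..t₁, (X (γs s r, uτ) - v) := by
      rw [intervalIntegral.integral_sub (hgc.intervalIntegrable t₀ t₁) intervalIntegrable_const,
        intervalIntegral.integral_const, ht]
    have hmain : (1 / s) • (∫ r in t₀..t₁, X (γs s r, uτ)) - lτ • v
        = (1 / s) • ∫ r in t₀..t₁, (X (γs s r, uτ) - v) := by
      rw [← hsub, smul_sub, smul_smul]
      congr 2
      field_simp
    rw [dist_eq_norm, hmain]
    have hsmul : ‖(1 / s) • ∫ r in t₀..t₁, (X (γs s r, uτ) - v)‖
        = (1 / s) * ‖∫ r in t₀..t₁, (X (γs s r, uτ) - v)‖ := by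
      rw [norm_smul, Real.norm_eq_abs, abs_of_pos (by positivity)]
    rw [hsmul]
    have habs : |t₁ - t₀| = lτ * s := by
      rw [ht, abs_of_nonneg (mul_nonneg hlτ hs0.le)]
    calc (1 / s) * ‖∫ r in t₀..t₁, (X (γs s r, uτ) - v)‖
        ≤ (1 / s) * (η' * |t₁ - t₀|) := by
          apply mul_le_mul_of_nonneg_left _ (by positivity)
          simpa [habs] using hnorm
      _ = η' * lτ := by rw [habs]; field_simp
      _ < η := by
          rw [hη'def, div_mul_eq_mul_div, div_lt_iff₀ (by linarith : (0:ℝ) < lτ + 1)]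
          nlinarith
  -- combine
  have hsum := hA.add hB
  have hlim : (δτ - lτ) • v' + lτ • v = δτ • v' + lτ • (v - v') := by module
  rw [← hlim]
  apply hsum.congr'
  filter_upwards [Ioc_mem_nhdsGT hε] with s hs
  rw [hdecomp s hs, smul_add]
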